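/- Let X be a compact topological space, R a range set, and d a continuous R-valued pseudo-ultrametric on X. Then the image of d is a tenuous subset of [0,∞): it is finite or consists of 0 together with a strictly decreasing positive sequence converging to 0. -/

import Mathlib

/-- A subset of `[0,∞)` is tenuous if it is finite or consists of `0` together
with a strictly decreasing positive sequence converging to `0`. -/
def Tenuous (K : Set ℝ) : Prop :=
  K.Finite ∨ ∃ a : ℕ → ℝ, StrictAnti a ∧ (∀ i, 0 < a i) ∧
    Filter.Tendsto a Filter.atTop (nhds 0) ∧ K = {0} ∪ Set.range a

theorem stmt_16 {X : Type*} [TopologicalSpace X] [CompactSpace X]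
    (R : Set ℝ) (hR : R ⊆ Set.Ici (0 : ℝ)) (h0 : (0 : ℝ) ∈ R)
    (d : X → X → ℝ)
    (hdR : ∀ x y, d x y ∈ R)
    (h_refl : ∀ x, d x x = 0)
    (h_symm : ∀ x y, d x y = d y x)
    (h_ultra : ∀ x y z, d x y ≤ max (d x z) (d z y))
    (h_cont : Continuous (fun p : X × X => d p.1 p.2)) :
    Tenuous (Set.range fun p : X × X => d p.1 p.2) := by
  classical
  set K : Set ℝ := Set.range fun p : X × X => d p.1 p.2 with hK
  rcases isEmpty_or_nonempty X with hX | hX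
  · left
    have : K = ∅ := Set.range_eq_empty _
    simp [this]
  -- every tail of K is finite
  have key : ∀ ε : ℝ, 0 < ε → (K ∩ Set.Ici ε).Finite := by
    intro ε hε
    have hU : ∀ x : X, IsOpen {y | d x y < ε} := by
      intro x
      exact isOpen_lt (h_cont.comp (Continuous.prodMk_right x)) continuous_const
    obtain ⟨t, ht⟩ := isCompact_univ.elim_finite_subcover
      (fun x : X => {y | d x y < ε}) hU
      (fun x _ => Set.mem_iUnion.2 ⟨x, by simp only [Set.mem_setOf_eq, h_refl x]; exact hε⟩)
    apply Set.Finite.subset (((t ×ˢ t : Finset (X × X)).finite_toSet).image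
      fun p => d p.1 p.2)
    rintro v ⟨⟨⟨x, y⟩, rfl⟩, hv⟩
    simp only [Set.mem_Ici] at hv
    obtain ⟨i, hit, hix⟩ : ∃ i ∈ t, d i x < ε := by
      have := ht (Set.mem_univ x)
      simpa using this
    obtain ⟨j, hjt, hjy⟩ : ∃ j ∈ t, d j y < ε := by
      have := ht (Set.mem_univ y)
      simpa using this
    refine ⟨(i, j), by simp [Finset.mem_product, hit, hjt], ?_⟩
    show d i j = d x y
    have h1 : d x y ≤ d i y := by
      have := h_ultra x y i
      have hxi : d x i < ε := by rw [h_symm]; exact hix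
      rcases le_max_iff.1 this with h | h
      · linarith
      · exact h
    have h2 : d i y ≤ d i j := by
      have := h_ultra i y j
      have hjy' : d j y < ε := hjy
      rcases le_max_iff.1 this with h | h
      · exact h
      · linarith
    have h3 : d i j ≤ d x y := by
      have := h_ultra i j x
      have h4 : d x j ≤ d x y := by
        have := h_ultra x j y
        have : d x j ≤ max (d x y) (d y j) := this
        have hyj : d y j < ε := by rw [h_symm]; exact hjy
        rcases le_max_iff.1 this with h | h
        · exact h
        · linarith
      rcases le_max_iff.1 this with h | h
      · linarith
      · linarith
    linarith [le_trans h1 h2]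
  have hKpos : ∀ v ∈ K, 0 ≤ v := by
    rintro v ⟨⟨x, y⟩, rfl⟩
    exact hR (hdR x y)
  have h0K : (0 : ℝ) ∈ K := by
    obtain ⟨x⟩ := hX
    exact ⟨(x, x), h_refl x⟩
  by_cases hfin : K.Finite
  · exact Or.inl hfin
  right
  set P : Set ℝ := K \ {0} with hP
  have hPpos : ∀ v ∈ P, 0 < v := fun v hv =>
    lt_of_le_of_ne (hKpos v hv.1) (Ne.symm hv.2)
  have hPfin : ∀ ε : ℝ, 0 < ε → (P ∩ Set.Ici ε).Finite := fun ε hε =>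
    (key ε hε).subset (Set.inter_subset_inter_left _ Set.diff_subset)
  have hPinf : P.Infinite := by
    intro hPf
    exact hfin (by
      have : K ⊆ P ∪ {0} := fun v hv => by
        by_cases h : v = 0
        · exact Or.inr h
        · exact Or.inl ⟨hv, h⟩
      exact (hPf.union (Set.finite_singleton 0)).subset this)
  -- max element of any nonempty subset of P
  have maxex : ∀ S : Set ℝ, S ⊆ P → S.Nonempty → ∃ m ∈ S, ∀ x ∈ S, x ≤ m := by
    intro S hSP ⟨s, hs⟩
    have hspos : 0 < s := hPpos s (hSP hs)
    have hF : (S ∩ Set.Ici s).Finite :=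
      (hPfin s hspos).subset (Set.inter_subset_inter_left _ hSP)
    have hFne : (S ∩ Set.Ici s).Nonempty := ⟨s, hs, le_refl s⟩
    obtain ⟨m, hm, hmmax⟩ := hF.exists_maximalFor id _ hFne
    refine ⟨m, hm.1, fun x hx => ?_⟩
    by_cases hxs : s ≤ x
    · by_contra hmx
      push_neg at hmx
      exact absurd (hmmax ⟨hx, hxs⟩ (le_of_lt hmx)) (not_le.2 hmx)
    · push_neg at hxs
      exact le_trans (le_of_lt hxs) hm.2
  have step : ∀ c : ℝ, 0 < c → ∃ m ∈ P ∩ Set.Iio c, ∀ x ∈ P ∩ Set.Iio c, x ≤ m := by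
    intro c hc
    apply maxex _ Set.inter_subset_left
    by_contra hne
    rw [Set.not_nonempty_iff_eq_empty] at hne
    apply hPinf
    have : P ⊆ P ∩ Set.Ici c := by
      intro x hx
      refine ⟨hx, ?_⟩
      rcases lt_or_ge x c with h | h
      · exact absurd ⟨hx, h⟩ (Set.eq_empty_iff_forall_notMem.1 hne x)
      · exact h
    exact (hPfin c hc).subset this
  choose! next hnext1 hnext2 using step
  obtain ⟨m0, hm0, hmax0⟩ := maxex P (le_refl P) hPinf.nonempty
  set a : ℕ → ℝ := fun n => Nat.rec m0 (fun _ c => next c) n with ha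
  have ha0 : a 0 = m0 := rfl
  have hasucc : ∀ n, a (n + 1) = next (a n) := fun n => rfl
  have hmem : ∀ n, a n ∈ P := by
    intro n
    induction n with
    | zero => exact hm0
    | succ n ih =>
      rw [hasucc]
      exact (hnext1 (a n) (hPpos _ ih)).1
  have hposa : ∀ n, 0 < a n := fun n => hPpos _ (hmem n)
  have hdec : ∀ n, a (n + 1) < a n := by
    intro n
    rw [hasucc]
    exact (hnext1 (a n) (hposa n)).2
  have hanti : StrictAnti a := strictAnti_nat_of_succ_lt hdec
  -- eventually below every ε
  have hbelow : ∀ ε : ℝ, 0 < ε → ∃ N, a N < ε := by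
    intro ε hε
    by_contra hall
    push_neg at hall
    have hinj : Function.Injective a := hanti.injective
    have : (P ∩ Set.Ici ε).Infinite :=
      Set.infinite_of_injective_forall_mem hinj (fun n => ⟨hmem n, hall n⟩)
    exact this (hPfin ε hε)
  have htend : Filter.Tendsto a Filter.atTop (nhds 0) := by
    rw [Metric.tendsto_atTop]
    intro ε hε
    obtain ⟨N, hN⟩ := hbelow ε hε
    refine ⟨N, fun n hn => ?_⟩
    rw [Real.dist_eq, sub_zero, abs_of_pos (hposa n)]
    exact lt_of_le_of_lt (hanti.antitone hn) hN
  refine ⟨a, hanti, hposa, htend, ?_⟩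
  ext v
  constructor
  · intro hv
    by_cases hv0 : v = 0
    · exact Or.inl hv0
    have hvP : v ∈ P := ⟨hv, hv0⟩
    have hvpos : 0 < v := hPpos v hvP
    right
    obtain ⟨N, hN⟩ := hbelow v hvpos
    have hex : ∃ n, a n < v := ⟨N, hN⟩
    set n := Nat.find hex with hn
    have hnlt : a n < v := Nat.find_spec hex
    have hn0 : n ≠ 0 := by
      intro h
      rw [h, ha0] at hnlt
      exact absurd (hmax0 v hvP) (not_le.2 hnlt)
    obtain ⟨m, hm⟩ := Nat.exists_eq_succ_of_ne_zero hn0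
    have hge : v ≤ a m := by
      have h := Nat.find_min hex (show m < Nat.find hex by rw [← hn, hm]; exact Nat.lt_succ_self m)
      push_neg at h
      exact h
    rcases eq_or_lt_of_le hge with heq | hlt
    · exact ⟨m, heq.symm⟩
    · exfalso
      have h2 := hnext2 (a m) (hposa m) v ⟨hvP, hlt⟩
      rw [← hasucc] at h2
      rw [hm] at hnlt
      exact absurd h2 (not_le.2 hnlt)
  · rintro (hv | ⟨n, rfl⟩)
    · rw [Set.mem_singleton_iff.1 hv]; exact h0K
    · exact (hmem n).1
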